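/- For every real u > 0, one has (u²/(1+u²)) · sup_{s ≥ 0} (e^{−2su} − 2 e^{−su} cos s + 1) < 1. -/
import Mathlib

open Real

/-- Key estimate: `t * exp (-(t/2)) ≤ 1 - exp (-t)` for `t ≥ 0`. -/
lemma key_exp_bound (t : ℝ) (ht : 0 ≤ t) :
    t * Real.exp (-(t / 2)) ≤ 1 - Real.exp (-t) := by
  have hsinh : t / 2 ≤ Real.sinh (t / 2) := Real.self_le_sinh_iff.2 (by linarith)
  rw [Real.sinh_eq] at hsinh
  have h1 : t ≤ Real.exp (t / 2) - Real.exp (-(t / 2)) := by linarith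
  have hpos : (0 : ℝ) < Real.exp (-(t / 2)) := Real.exp_pos _
  have h2 := mul_le_mul_of_nonneg_right h1 hpos.le
  have he : Real.exp (t / 2) * Real.exp (-(t / 2)) = 1 := by
    rw [← Real.exp_add]; ring_nf; exact Real.exp_zero
  have he2 : Real.exp (-(t / 2)) * Real.exp (-(t / 2)) = Real.exp (-t) := by
    rw [← Real.exp_add]; ring_nf
  nlinarith [h2]

/-- Pointwise bound: `t^2 * exp(-t) ≤ (1 - exp(-t))^2` for `t ≥ 0`. -/
lemma sq_exp_bound (t : ℝ) (ht : 0 ≤ t) :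
    t ^ 2 * Real.exp (-t) ≤ (1 - Real.exp (-t)) ^ 2 := by
  have h := key_exp_bound t ht
  have h1 : 0 ≤ t * Real.exp (-(t / 2)) := by positivity
  have h2 : Real.exp (-(t / 2)) * Real.exp (-(t / 2)) = Real.exp (-t) := by
    rw [← Real.exp_add]; ring_nf
  nlinarith [h, h1]

theorem substituted_sup_inequality (u : ℝ) (hu : 0 < u) :
    (u ^ 2 / (1 + u ^ 2)) *
      (⨆ s : Set.Ici (0 : ℝ),
        Real.exp (-2 * (s : ℝ) * u) - 2 * Real.exp (-(s : ℝ) * u) * Real.cos (s : ℝ) + 1) < 1 := by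
  haveI : Nonempty (Set.Ici (0 : ℝ)) := ⟨⟨0, Set.mem_Ici.2 le_rfl⟩⟩
  obtain ⟨C, hC, hCpos⟩ : ∃ C : ℝ, C = (1 + u ^ 2) / u ^ 2 ∧ 0 < C :=
    ⟨_, rfl, by positivity⟩
  obtain ⟨y₀, hy₀pos, hy₀half, hy₀u⟩ :
      ∃ y₀ : ℝ, 0 < y₀ ∧ y₀ ≤ 1/2 ∧ y₀ * u ^ 2 ≤ 1/3 := by
    refine ⟨min (1/2) (1/(3 * u ^ 2)), lt_min (by norm_num) (by positivity),
      min_le_left _ _, ?_⟩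
    calc min (1/2) (1/(3*u^2)) * u ^ 2 ≤ (1/(3*u^2)) * u ^ 2 := by
            exact mul_le_mul_of_nonneg_right (min_le_right _ _) (by positivity)
        _ ≤ 1/3 := by rw [div_mul_eq_mul_div, div_le_div_iff₀ (by positivity) (by norm_num)]; nlinarith
  have hA1 : (1 + y₀) ^ 2 < C := by
    rw [hC, lt_div_iff₀ (by positivity)]
    have h5 : y₀ * y₀ * u ^ 2 ≤ (1/2) * (y₀ * u ^ 2) := by
      nlinarith [mul_le_mul_of_nonneg_right hy₀half (by positivity : (0:ℝ) ≤ y₀ * u ^ 2)]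
    nlinarith [hy₀u, hy₀half, h5]
  have hA2 : C * (1 - y₀) ^ 2 < C := by
    have h1 : (1 - y₀) ^ 2 < 1 := by nlinarith
    nlinarith
  set B : ℝ := max ((1 + y₀) ^ 2) (C * (1 - y₀) ^ 2) with hB
  have hBC : B < C := max_lt hA1 hA2
  have hpt : ∀ s : Set.Ici (0 : ℝ),
      Real.exp (-2 * (s : ℝ) * u) - 2 * Real.exp (-(s : ℝ) * u) * Real.cos (s : ℝ) + 1 ≤ B := by
    rintro ⟨s, hs⟩
    simp only [Set.mem_Ici] at hs
    obtain ⟨y, hy, hypos, hyle⟩ : ∃ y : ℝ, y = Real.exp (-s * u) ∧ 0 < y ∧ y ≤ 1 :=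
      ⟨_, rfl, Real.exp_pos _, Real.exp_le_one_iff.2 (by nlinarith)⟩
    have hysq : Real.exp (-2 * s * u) = y ^ 2 := by
      rw [hy, show (-2:ℝ) * s * u = (-s * u) + (-s * u) by ring, Real.exp_add, ← pow_two]
    have hcos1 : -1 ≤ Real.cos s := Real.neg_one_le_cos s
    have hcosle : Real.cos s ≤ 1 := Real.cos_le_one s
    rcases le_or_gt y y₀ with hycase | hycase
    · have hstep : y ^ 2 - 2 * y * Real.cos s + 1 ≤ (1 + y₀) ^ 2 := by nlinarith
      calc Real.exp (-2 * s * u) - 2 * Real.exp (-s * u) * Real.cos s + 1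
          = y ^ 2 - 2 * y * Real.cos s + 1 := by rw [hysq, hy]
        _ ≤ (1 + y₀) ^ 2 := hstep
        _ ≤ B := le_max_left _ _
    · have hcos2 : 1 - s ^ 2 / 2 ≤ Real.cos s := Real.one_sub_sq_div_two_le_cos
      have ht : (s * u) ^ 2 * Real.exp (-(s * u)) ≤ (1 - Real.exp (-(s * u))) ^ 2 :=
        sq_exp_bound (s * u) (by positivity)
      have hyy : Real.exp (-(s * u)) = y := by rw [hy]; ring_nf
      rw [hyy] at ht
      have hmain : u ^ 2 * (y ^ 2 - 2 * y * Real.cos s + 1) ≤ (1 + u ^ 2) * (1 - y) ^ 2 := by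
        nlinarith [mul_le_mul_of_nonneg_left hcos2
          (by positivity : (0:ℝ) ≤ 2 * u ^ 2 * y), ht]
      have hCb : y ^ 2 - 2 * y * Real.cos s + 1 ≤ C * (1 - y) ^ 2 := by
        rw [hC, div_mul_eq_mul_div, le_div_iff₀ (by positivity)]
        nlinarith [hmain]
      have hsq : (1 - y) ^ 2 ≤ (1 - y₀) ^ 2 := by nlinarith
      have hmono : C * (1 - y) ^ 2 ≤ C * (1 - y₀) ^ 2 :=
        mul_le_mul_of_nonneg_left hsq hCpos.le
      calc Real.exp (-2 * s * u) - 2 * Real.exp (-s * u) * Real.cos s + 1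
          = y ^ 2 - 2 * y * Real.cos s + 1 := by rw [hysq, hy]
        _ ≤ C * (1 - y) ^ 2 := hCb
        _ ≤ C * (1 - y₀) ^ 2 := hmono
        _ ≤ B := le_max_right _ _
  have hsup : (⨆ s : Set.Ici (0 : ℝ),
      Real.exp (-2 * (s : ℝ) * u) - 2 * Real.exp (-(s : ℝ) * u) * Real.cos (s : ℝ) + 1) ≤ B :=
    ciSup_le hpt
  have hDpos : 0 < u ^ 2 / (1 + u ^ 2) := by positivity
  have hDC : (u ^ 2 / (1 + u ^ 2)) * C = 1 := by
    rw [hC]; field_simp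
  calc (u ^ 2 / (1 + u ^ 2)) *
      (⨆ s : Set.Ici (0 : ℝ),
        Real.exp (-2 * (s : ℝ) * u) - 2 * Real.exp (-(s : ℝ) * u) * Real.cos (s : ℝ) + 1)
      ≤ (u ^ 2 / (1 + u ^ 2)) * B := mul_le_mul_of_nonneg_left hsup hDpos.le
    _ < (u ^ 2 / (1 + u ^ 2)) * C := mul_lt_mul_of_pos_left hBC hDpos
    _ = 1 := hDC
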